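/- Let μ be a positive measure on the unit disc such that the top half of every dyadic Carleson square has μ-measure at least τ times the μ-measure of the square, where 0 < τ < 1. Let b, d be nonnegative functions constant on top halves of dyadic Carleson squares satisfying b(T) ≤ b(T(P(C))) + d(T) for every square C with top half T and parent P(C) (with the parent term interpreted as 0 for the root). Let B, D be the ancestral maxima of b, d. Then for all λ > 0, α > 1, γ > 0, and every maximal Carleson square C on whose top half B ≥ λ (and whose parent's top half has B < λ): μ{z ∈ C : B(z) ≥ αλ and D(z) ≤ γλ} ≤ (1-τ)^{⌈(α-1)/γ⌉ - 1}·μ(C). -/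

import Mathlib

open MeasureTheory
open scoped NNReal ENNReal

/-- The dyadic Carleson square at level `n` with angular index `k` (`k < 2^n`). -/
def carlesonSq (n k : ℕ) : Set ℂ :=
  {z : ℂ | 1 - (2:ℝ) ^ (-(n:ℤ)) ≤ ‖z‖ ∧ ‖z‖ < 1 ∧
    ∃ θ : ℝ, z = ((‖z‖ : ℝ) : ℂ) * Complex.exp ((θ : ℂ) * Complex.I) ∧
      2 * Real.pi * k / 2 ^ n ≤ θ ∧ θ < 2 * Real.pi * (k + 1) / 2 ^ n}

/-- The top half of the dyadic Carleson square. -/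
def carlesonTop (n k : ℕ) : Set ℂ :=
  {z ∈ carlesonSq n k | ‖z‖ < 1 - (2:ℝ) ^ (-(n:ℤ) - 1)}

noncomputable def theta0 (z : ℂ) : ℝ :=
  if 0 ≤ Complex.arg z then Complex.arg z else Complex.arg z + 2 * Real.pi

lemma theta0_nonneg (z : ℂ) : 0 ≤ theta0 z := by
  unfold theta0
  have h1 := Complex.neg_pi_lt_arg z
  have hpi := Real.pi_pos
  split <;> linarith

lemma theta0_lt (z : ℂ) : theta0 z < 2 * Real.pi := by
  unfold theta0
  have h1 := Complex.arg_le_pi z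
  have hpi := Real.pi_pos
  split <;> [linarith; linarith]

lemma theta0_spec (z : ℂ) : z = ((‖z‖ : ℝ) : ℂ) * Complex.exp ((theta0 z : ℂ) * Complex.I) := by
  unfold theta0
  split
  · exact (Complex.norm_mul_exp_arg_mul_I z).symm
  · rw [show ((Complex.arg z + 2 * Real.pi : ℝ) : ℂ) = Complex.arg z + 2 * Real.pi by push_cast; ring]
    rw [add_mul, Complex.exp_add, Complex.exp_two_pi_mul_I, mul_one]
    exact (Complex.norm_mul_exp_arg_mul_I z).symm

lemma exp_theta_inj {θ₁ θ₂ : ℝ} (h10 : 0 ≤ θ₁) (h12 : θ₁ < 2 * Real.pi)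
    (h20 : 0 ≤ θ₂) (h22 : θ₂ < 2 * Real.pi)
    (h : Complex.exp ((θ₁ : ℂ) * Complex.I) = Complex.exp ((θ₂ : ℂ) * Complex.I)) : θ₁ = θ₂ := by
  rw [Complex.exp_eq_exp_iff_exists_int] at h
  obtain ⟨m, hm⟩ := h
  have hre : θ₁ = θ₂ + m * (2 * Real.pi) := by
    have h2 := congrArg Complex.im hm
    simp [Complex.add_im, Complex.mul_im] at h2
    linarith
  have hpi := Real.pi_pos
  have hm0 : m = 0 := by
    rcases lt_trichotomy m 0 with h' | h' | h'
    · have : (m : ℝ) ≤ -1 := by exact_mod_cast Int.le_sub_one_of_lt h'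
      nlinarith
    · exact h'
    · have : (1 : ℝ) ≤ m := by exact_mod_cast h'
      nlinarith
  rw [hm0] at hre; simpa using hre

/-- unique theta witness characterization -/
lemma mem_sq_iff {n k : ℕ} (hk : k < 2 ^ n) {z : ℂ} :
    z ∈ carlesonSq n k ↔ 1 - (2:ℝ) ^ (-(n:ℤ)) ≤ ‖z‖ ∧ ‖z‖ < 1 ∧
      (z = 0 ∨ (2 * Real.pi * k / 2 ^ n ≤ theta0 z ∧ theta0 z < 2 * Real.pi * (k + 1) / 2 ^ n)) := by
  have hpi := Real.pi_pos
  have hpow : (0:ℝ) < 2 ^ n := by positivity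
  have hb : 2 * Real.pi * (k + 1) / 2 ^ n ≤ 2 * Real.pi := by
    rw [div_le_iff₀ hpow]
    have : ((k:ℝ) + 1) ≤ 2 ^ n := by exact_mod_cast hk
    nlinarith
  have ha : 0 ≤ 2 * Real.pi * k / 2 ^ n := by positivity
  constructor
  · rintro ⟨h1, h2, θ, hz, hθ1, hθ2⟩
    refine ⟨h1, h2, ?_⟩
    rcases eq_or_ne z 0 with h0 | h0
    · exact Or.inl h0
    · right
      have habs : (‖z‖ : ℝ) ≠ 0 := by
        simpa [norm_ne_zero_iff] using h0
      have hexp : Complex.exp ((θ : ℂ) * Complex.I) = Complex.exp ((theta0 z : ℂ) * Complex.I) := by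
        have h' := hz.symm.trans (theta0_spec z)
        exact mul_left_cancel₀ (by exact_mod_cast habs) h'
      have := exp_theta_inj (le_trans ha hθ1) (lt_of_lt_of_le hθ2 hb)
        (theta0_nonneg z) (theta0_lt z) hexp
      rw [← this]
      exact ⟨hθ1, hθ2⟩
  · rintro ⟨h1, h2, h3⟩
    refine ⟨h1, h2, ?_⟩
    rcases h3 with h0 | ⟨hθ1, hθ2⟩
    · refine ⟨2 * Real.pi * k / 2 ^ n, ?_, le_refl _, ?_⟩
      · simp [h0]
      · rw [div_lt_div_iff₀ hpow hpow]
        nlinarith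
    · exact ⟨theta0 z, theta0_spec z, hθ1, hθ2⟩

lemma measurable_theta0 : Measurable theta0 := by
  unfold theta0
  exact Measurable.ite (measurableSet_le measurable_const Complex.measurable_arg)
    Complex.measurable_arg (Complex.measurable_arg.add_const _)

lemma measurableSet_sq {n k : ℕ} (hk : k < 2 ^ n) : MeasurableSet (carlesonSq n k) := by
  have : carlesonSq n k = {z : ℂ | 1 - (2:ℝ) ^ (-(n:ℤ)) ≤ ‖z‖ ∧ ‖z‖ < 1 ∧
      (z = 0 ∨ (2 * Real.pi * k / 2 ^ n ≤ theta0 z ∧ theta0 z < 2 * Real.pi * (k + 1) / 2 ^ n))} := by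
    ext z; exact mem_sq_iff hk
  rw [this]
  have habs : Measurable (fun z : ℂ => ‖z‖) := continuous_norm.measurable
  apply MeasurableSet.inter (measurableSet_le measurable_const habs)
  apply MeasurableSet.inter (measurableSet_lt habs measurable_const)
  apply MeasurableSet.union
  · exact MeasurableSet.singleton 0
  · exact MeasurableSet.inter (measurableSet_le measurable_const measurable_theta0)
      (measurableSet_lt measurable_theta0 measurable_const)

lemma measurableSet_top {n k : ℕ} (hk : k < 2 ^ n) : MeasurableSet (carlesonTop n k) :=
  (measurableSet_sq hk).inter
    (measurableSet_lt continuous_norm.measurable measurable_const)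

lemma radial_child_le {n : ℕ} : ((2:ℝ) ^ (-((n+1:ℕ):ℤ)) = (2:ℝ) ^ (-(n:ℤ) - 1)) := by
  congr 1; push_cast; ring

lemma half_le_radial {n : ℕ} : (2:ℝ) ^ (-(n:ℤ) - 1) ≤ 1/2 := by
  have : (-(n:ℤ) - 1) ≤ -1 := by omega
  calc (2:ℝ) ^ (-(n:ℤ) - 1) ≤ (2:ℝ) ^ (-1 : ℤ) := by
        apply zpow_le_zpow_right₀ (by norm_num) this
    _ = 1/2 := by norm_num

lemma sq_decomp {n k : ℕ} (hk : k < 2 ^ n) :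
    carlesonSq n k =
      carlesonTop n k ∪ (carlesonSq (n+1) (2*k) ∪ carlesonSq (n+1) (2*k+1)) := by
  have hpow : (0:ℝ) < 2 ^ n := by positivity
  have hpow1 : (0:ℝ) < 2 ^ (n+1) := by positivity
  have hpi := Real.pi_pos
  have ha0 : 2 * Real.pi * (2*k : ℕ) / 2 ^ (n+1) = 2 * Real.pi * k / 2 ^ n := by
    push_cast; rw [pow_succ]; field_simp
  have hb1 : 2 * Real.pi * ((2*k+1 : ℕ) + 1) / 2 ^ (n+1) = 2 * Real.pi * (k + 1) / 2 ^ n := by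
    push_cast; rw [pow_succ]; field_simp; ring
  have hmid : 2 * Real.pi * ((2*k : ℕ) + 1) / 2 ^ (n+1) = 2 * Real.pi * (2*k+1 : ℕ) / 2 ^ (n+1) := by
    push_cast; ring_nf
  ext z
  constructor
  · rintro ⟨h1, h2, θ, hz, hθ1, hθ2⟩
    by_cases habs : ‖z‖ < 1 - (2:ℝ) ^ (-(n:ℤ) - 1)
    · exact Or.inl ⟨⟨h1, h2, θ, hz, hθ1, hθ2⟩, habs⟩
    · right
      push_neg at habs
      have h1' : 1 - (2:ℝ) ^ (-((n+1:ℕ):ℤ)) ≤ ‖z‖ := by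
        rw [radial_child_le]; exact habs
      by_cases hθm : θ < 2 * Real.pi * ((2*k : ℕ) + 1) / 2 ^ (n+1)
      · exact Or.inl ⟨h1', h2, θ, hz, by rw [ha0]; exact hθ1, hθm⟩
      · push_neg at hθm
        refine Or.inr ⟨h1', h2, θ, hz, by rw [← hmid]; exact hθm, ?_⟩
        rw [hb1]; exact hθ2
  · rintro (hz | hz | hz)
    · exact hz.1
    · obtain ⟨h1, h2, θ, hzθ, hθ1, hθ2⟩ := hz
      refine ⟨?_, h2, θ, hzθ, by rw [← ha0]; exact hθ1, ?_⟩
      · refine le_trans ?_ h1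
        rw [radial_child_le]
        have : (-(n:ℤ)) ≤ (-(n:ℤ) - 1) ∨ True := Or.inr trivial
        have hle : (2:ℝ) ^ (-(n:ℤ) - 1) ≤ (2:ℝ) ^ (-(n:ℤ)) :=
          zpow_le_zpow_right₀ (by norm_num) (by omega)
        linarith
      · refine lt_of_lt_of_le hθ2 ?_
        rw [hmid, ← hb1]
        have hpi' : (0:ℝ) ≤ 2 * Real.pi := by linarith
        apply div_le_div_of_nonneg_right ?_ hpow1.le
        push_cast; nlinarith
    · obtain ⟨h1, h2, θ, hzθ, hθ1, hθ2⟩ := hz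
      refine ⟨?_, h2, θ, hzθ, ?_, by rw [← hb1]; exact hθ2⟩
      · refine le_trans ?_ h1
        rw [radial_child_le]
        have hle : (2:ℝ) ^ (-(n:ℤ) - 1) ≤ (2:ℝ) ^ (-(n:ℤ)) :=
          zpow_le_zpow_right₀ (by norm_num) (by omega)
        linarith
      · rw [← ha0]
        refine le_trans ?_ hθ1
        apply div_le_div_of_nonneg_right ?_ hpow1.le
        push_cast; nlinarith

lemma top_disj_child {n k k' : ℕ} :
    Disjoint (carlesonTop n k) (carlesonSq (n+1) k') := by
  rw [Set.disjoint_left]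
  rintro z ⟨_, htop⟩ ⟨h1, _⟩
  rw [radial_child_le] at h1
  linarith

lemma ne_zero_of_child {n k : ℕ} {z : ℂ} (hz : z ∈ carlesonSq (n+1) k) : z ≠ 0 := by
  obtain ⟨h1, _, _⟩ := hz
  intro h0
  rw [h0] at h1
  simp only [norm_zero] at h1
  have := half_le_radial (n := n)
  rw [radial_child_le] at h1
  linarith

lemma child_disj {n k : ℕ} (hk : k < 2 ^ n) :
    Disjoint (carlesonSq (n+1) (2*k)) (carlesonSq (n+1) (2*k+1)) := by
  have hk0 : 2*k < 2 ^ (n+1) := by omega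
  have hk1 : 2*k+1 < 2 ^ (n+1) := by omega
  rw [Set.disjoint_left]
  intro z hz0 hz1
  have hne := ne_zero_of_child hz0
  rw [mem_sq_iff hk0] at hz0
  rw [mem_sq_iff hk1] at hz1
  rcases hz0.2.2 with h | h0; · exact hne h
  rcases hz1.2.2 with h | h1; · exact hne h
  have e1 : ((2*k : ℕ) : ℝ) + 1 = ((2*k+1 : ℕ) : ℝ) := by push_cast; ring
  rw [e1] at h0
  linarith [h0.2, h1.1]

lemma sum_range_two_mul (f : ℕ → ℝ≥0∞) (m : ℕ) :
    ∑ i ∈ Finset.range (2*m), f i = ∑ i ∈ Finset.range m, (f (2*i) + f (2*i+1)) := by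
  induction m with
  | zero => simp
  | succ m ih =>
      rw [show 2*(m+1) = (2*m+1)+1 from by ring, Finset.sum_range_succ, Finset.sum_range_succ,
        ih, Finset.sum_range_succ]
      ring

lemma measure_step (μ : Measure ℂ) {τ : ℝ} (hτ0 : 0 < τ)
    (hμ : ∀ n k : ℕ, k < 2 ^ n → ENNReal.ofReal τ * μ (carlesonSq n k) ≤ μ (carlesonTop n k))
    {n k : ℕ} (hk : k < 2 ^ n) (hfin : μ (carlesonSq n k) ≠ ⊤) :
    μ (carlesonSq (n+1) (2*k)) + μ (carlesonSq (n+1) (2*k+1)) ≤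
      ENNReal.ofReal (1 - τ) * μ (carlesonSq n k) := by
  have hk1 : 2*k+1 < 2^(n+1) := by rw [pow_succ]; omega
  have hunion : carlesonSq (n+1) (2*k) ∪ carlesonSq (n+1) (2*k+1)
      = carlesonSq n k \ carlesonTop n k := by
    rw [sq_decomp hk, Set.union_diff_cancel_left]
    exact Set.disjoint_iff.mp (Disjoint.union_right top_disj_child top_disj_child)
  have htopfin : μ (carlesonTop n k) ≠ ⊤ := by
    intro h
    exact hfin (top_le_iff.mp (le_trans (le_of_eq h.symm) (measure_mono (fun z hz => hz.1))))
  calc μ (carlesonSq (n+1) (2*k)) + μ (carlesonSq (n+1) (2*k+1))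
      = μ (carlesonSq (n+1) (2*k) ∪ carlesonSq (n+1) (2*k+1)) :=
        (measure_union (child_disj hk) (measurableSet_sq hk1)).symm
    _ = μ (carlesonSq n k \ carlesonTop n k) := by rw [hunion]
    _ = μ (carlesonSq n k) - μ (carlesonTop n k) :=
        measure_diff (fun z hz => hz.1) (measurableSet_top hk).nullMeasurableSet htopfin
    _ ≤ μ (carlesonSq n k) - ENNReal.ofReal τ * μ (carlesonSq n k) :=
        tsub_le_tsub_left (hμ n k hk) _
    _ = (1 - ENNReal.ofReal τ) * μ (carlesonSq n k) := by
        rw [ENNReal.sub_mul (fun _ _ => hfin), one_mul]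
    _ = ENNReal.ofReal (1 - τ) * μ (carlesonSq n k) := by
        rw [ENNReal.ofReal_sub _ hτ0.le, ENNReal.ofReal_one]

lemma idx_lt {n k j i : ℕ} (hk : k < 2 ^ n) (hi : i < 2 ^ j) :
    k * 2 ^ j + i < 2 ^ (n + j) := by
  have h1 : k * 2 ^ j + i < (k + 1) * 2 ^ j := by
    have : (k + 1) * 2 ^ j = k * 2 ^ j + 2 ^ j := by ring
    omega
  have h2 : (k + 1) * 2 ^ j ≤ 2 ^ n * 2 ^ j := Nat.mul_le_mul_right _ hk
  rw [pow_add]; omega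

lemma no_bad_in_top
    (bnode dnode : ℕ → ℕ → ℝ≥0)
    (hrec : ∀ n k : ℕ, k < 2 ^ (n + 1) →
      bnode (n + 1) k ≤ bnode n (k / 2) + dnode (n + 1) k)
    (hroot : bnode 0 0 ≤ dnode 0 0)
    (B D : ℂ → ℝ≥0)
    (hB : ∀ n k : ℕ, k < 2 ^ n → ∀ z ∈ carlesonTop n k,
      B z = (Finset.range (n + 1)).sup (fun m => bnode m (k / 2 ^ (n - m))))
    (hD : ∀ n k : ℕ, k < 2 ^ n → ∀ z ∈ carlesonTop n k,
      D z = (Finset.range (n + 1)).sup (fun m => dnode m (k / 2 ^ (n - m))))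
    (lam alpha gamma : ℝ≥0) (hlam : 0 < lam) (halpha : 1 < alpha) (hgamma : 0 < gamma)
    (n k : ℕ) (hk : k < 2 ^ n)
    (hparent : n = 0 ∨ (Finset.range n).sup (fun m => bnode m (k / 2 ^ (n - m))) < lam)
    (j i : ℕ) (hi : i < 2 ^ j) (hj : j + 2 ≤ ⌈((alpha : ℝ) - 1) / (gamma : ℝ)⌉₊)
    (z : ℂ) (hz : z ∈ carlesonTop (n + j) (k * 2 ^ j + i))
    (hzB : alpha * lam ≤ B z) (hzD : D z ≤ gamma * lam) : False := by
  set k' := k * 2 ^ j + i with hk'def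
  have hk' : k' < 2 ^ (n + j) := idx_lt hk hi
  have hBz := hB (n + j) k' hk' z hz
  have hDz := hD (n + j) k' hk' z hz
  have hDall : ∀ m, m ≤ n + j → dnode m (k' / 2 ^ (n + j - m)) ≤ gamma * lam := by
    intro m hm
    refine le_trans (le_trans (Finset.le_sup (f := fun m => dnode m (k' / 2 ^ (n + j - m)))
      (Finset.mem_range.mpr (by omega))) (le_of_eq hDz.symm)) hzD
  have hquot : k' / 2 ^ j = k := by
    rw [hk'def, add_comm, Nat.add_mul_div_right _ _ (Nat.two_pow_pos j),
      Nat.div_eq_of_lt hi, zero_add]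
  -- the main inductive claim
  have claim : ∀ i', i' ≤ j →
      ((bnode (n + i') (k' / 2 ^ (j - i')) : ℝ) < (lam : ℝ) + (i' + 1) * gamma * lam) := by
    intro i'
    induction i' with
    | zero =>
      intro _
      simp only [Nat.add_zero, Nat.sub_zero, Nat.cast_zero, zero_add, one_mul]
      rw [hquot]
      match n, hk, hparent with
      | 0, hk, _ =>
        have hk0 : k = 0 := by omega
        have hd : dnode 0 (k' / 2 ^ (0 + j - 0)) ≤ gamma * lam := hDall 0 (by omega)
        rw [show 0 + j - 0 = j from by omega, hquot, hk0] at hd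
        have : bnode 0 k ≤ gamma * lam := by rw [hk0]; exact le_trans hroot hd
        have := NNReal.coe_le_coe.mpr this
        push_cast at this ⊢
        have hlam' : (0:ℝ) < lam := hlam
        linarith
      | (m+1), hk, hparent =>
        rcases hparent with h0 | hp
        · exact absurd h0 (by omega)
        · have h1 := hrec m k hk
          have h2 : bnode m (k / 2 ^ (m + 1 - m)) < lam :=
            lt_of_le_of_lt (Finset.le_sup (f := fun m' => bnode m' (k / 2 ^ (m + 1 - m')))
              (Finset.mem_range.mpr (by omega))) hp
          rw [show m + 1 - m = 1 from by omega, pow_one] at h2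
          have h3 : dnode (m+1) k ≤ gamma * lam := by
            have := hDall (m+1) (by omega)
            rwa [show m + 1 + j - (m+1) = j from by omega, hquot] at this
          have := NNReal.coe_le_coe.mpr h1
          have h2' := NNReal.coe_lt_coe.mpr h2
          have h3' := NNReal.coe_le_coe.mpr h3
          push_cast at this h2' h3' ⊢
          linarith
    | succ i' ih =>
      intro h
      have hprev := ih (by omega)
      have hidxlt : k' / 2 ^ (j - (i' + 1)) < 2 ^ (n + i' + 1) := by
        rw [Nat.div_lt_iff_lt_mul (Nat.two_pow_pos _), ← pow_add,
          show n + i' + 1 + (j - (i' + 1)) = n + j from by omega]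
        exact hk'
      have h1 := hrec (n + i') (k' / 2 ^ (j - (i' + 1))) hidxlt
      have hdiv : k' / 2 ^ (j - (i' + 1)) / 2 = k' / 2 ^ (j - i') := by
        rw [Nat.div_div_eq_div_mul, ← pow_succ, show j - (i' + 1) + 1 = j - i' from by omega]
      rw [hdiv] at h1
      have h3 : dnode (n + i' + 1) (k' / 2 ^ (j - (i' + 1))) ≤ gamma * lam := by
        have := hDall (n + i' + 1) (by omega)
        rwa [show n + j - (n + i' + 1) = j - (i' + 1) from by omega] at this
      have h1' := NNReal.coe_le_coe.mpr h1
      have h3' := NNReal.coe_le_coe.mpr h3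
      push_cast at h1' h3' ⊢
      push_cast at hprev
      rw [show n + (i' + 1) = n + i' + 1 from by omega]
      linarith
  -- ceil bound
  have hx0 : (0:ℝ) ≤ ((alpha : ℝ) - 1) / (gamma : ℝ) := by
    have h1 : (1:ℝ) < alpha := halpha
    have h2 : (0:ℝ) < gamma := hgamma
    exact div_nonneg (by linarith) h2.le
  have hceil : ((j:ℝ) + 1) * gamma < (alpha : ℝ) - 1 := by
    have h1 := Nat.ceil_lt_add_one hx0
    have h2 : ((j:ℝ) + 2) ≤ (⌈((alpha : ℝ) - 1) / (gamma : ℝ)⌉₊ : ℝ) := by exact_mod_cast hj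
    have h3 : ((j:ℝ) + 1) < ((alpha : ℝ) - 1) / (gamma : ℝ) := by linarith
    have h4 : (0:ℝ) < gamma := hgamma
    calc ((j:ℝ) + 1) * gamma < (((alpha : ℝ) - 1) / gamma) * gamma :=
          mul_lt_mul_of_pos_right h3 h4
      _ = (alpha : ℝ) - 1 := by field_simp
  have hsup : B z < alpha * lam := by
    rw [hBz, Finset.sup_lt_iff]
    · intro m hm
      rw [Finset.mem_range] at hm
      by_cases hmn : m < n
      · rcases hparent with h0 | hp
        · omega
        · have hidx2 : k' / 2 ^ (n + j - m) = k / 2 ^ (n - m) := by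
            rw [← hquot, Nat.div_div_eq_div_mul, ← pow_add,
              show j + (n - m) = n + j - m from by omega]
          rw [hidx2]
          have h5 := lt_of_le_of_lt (Finset.le_sup (f := fun m => bnode m (k / 2 ^ (n - m)))
            (Finset.mem_range.mpr hmn)) hp
          have hlam' : lam < alpha * lam := by
            have := mul_lt_mul_of_pos_right halpha hlam
            simpa using this
          exact lt_trans h5 hlam'
      · push_neg at hmn
        have hm' : m = n + (m - n) := by omega
        have hi'j : m - n ≤ j := by omega
        have h5 := claim (m - n) hi'j
        rw [hm', show n + j - (n + (m - n)) = j - (m - n) from by omega]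
        rw [← NNReal.coe_lt_coe]
        push_cast
        have h6 : ((m - n : ℕ) : ℝ) ≤ (j : ℝ) := by exact_mod_cast hi'j
        have h7 : (0:ℝ) < lam := hlam
        have h8 : (0:ℝ) < gamma := hgamma
        have h9 : ((m - n : ℕ) : ℝ) + 1 ≤ (j : ℝ) + 1 := by linarith
        nlinarith [mul_le_mul_of_nonneg_right h9 (mul_nonneg h8.le h7.le),
          mul_lt_mul_of_pos_right hceil h7]
    · have : (0:ℝ≥0) < alpha * lam := mul_pos (lt_trans one_pos halpha) hlam
      simpa using this
  exact absurd hzB (not_le.mpr hsup)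
/-- good-lambda inequality for the ancestral maxima `B`, `D` of functions
`b`, `d` on the dyadic Carleson tree satisfying `b(T) ≤ b(T(P(C))) + d(T)`, with respect
to a measure `μ` whose top halves carry at least a `τ` fraction of their squares. -/
theorem good_lambda_carleson (μ : Measure ℂ)
    (τ : ℝ) (hτ0 : 0 < τ) (hτ1 : τ < 1)
    (hμ : ∀ n k : ℕ, k < 2 ^ n →
      ENNReal.ofReal τ * μ (carlesonSq n k) ≤ μ (carlesonTop n k))
    (bnode dnode : ℕ → ℕ → ℝ≥0)
    (hrec : ∀ n k : ℕ, k < 2 ^ (n + 1) →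
      bnode (n + 1) k ≤ bnode n (k / 2) + dnode (n + 1) k)
    (hroot : bnode 0 0 ≤ dnode 0 0)
    (B D : ℂ → ℝ≥0)
    (hB : ∀ n k : ℕ, k < 2 ^ n → ∀ z ∈ carlesonTop n k,
      B z = (Finset.range (n + 1)).sup (fun m => bnode m (k / 2 ^ (n - m))))
    (hD : ∀ n k : ℕ, k < 2 ^ n → ∀ z ∈ carlesonTop n k,
      D z = (Finset.range (n + 1)).sup (fun m => dnode m (k / 2 ^ (n - m))))
    (lam alpha gamma : ℝ≥0) (hlam : 0 < lam) (halpha : 1 < alpha) (hgamma : 0 < gamma)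
    (n k : ℕ) (hk : k < 2 ^ n)
    (hBge : lam ≤ (Finset.range (n + 1)).sup (fun m => bnode m (k / 2 ^ (n - m))))
    (hparent : n = 0 ∨ (Finset.range n).sup (fun m => bnode m (k / 2 ^ (n - m))) < lam) :
    μ {z ∈ carlesonSq n k | alpha * lam ≤ B z ∧ D z ≤ gamma * lam} ≤
      ENNReal.ofReal ((1 - τ) ^ (⌈((alpha : ℝ) - 1) / (gamma : ℝ)⌉₊ - 1)) *
        μ (carlesonSq n k) := by
  rcases eq_or_ne (μ (carlesonSq n k)) ⊤ with htopm | hfin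
  · rw [htopm, ENNReal.mul_top]
    · exact le_top
    · simp only [ne_eq, ENNReal.ofReal_eq_zero, not_le]
      exact pow_pos (by linarith) _
  · set g := ⌈((alpha : ℝ) - 1) / (gamma : ℝ)⌉₊ - 1 with hg
    have key : ∀ j, (∑ i ∈ Finset.range (2 ^ j), μ (carlesonSq (n + j) (k * 2 ^ j + i)))
        ≤ ENNReal.ofReal (1 - τ) ^ j * μ (carlesonSq n k) := by
      intro j
      induction j with
      | zero => simp
      | succ j ih =>
        have hfinj : ∀ i ∈ Finset.range (2 ^ j),
            μ (carlesonSq (n + j) (k * 2 ^ j + i)) ≠ ⊤ := by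
          intro i hi h
          have h1 : (⊤:ℝ≥0∞) ≤ ∑ i ∈ Finset.range (2 ^ j),
              μ (carlesonSq (n + j) (k * 2 ^ j + i)) := by
            rw [← h]
            exact Finset.single_le_sum (f := fun i => μ (carlesonSq (n + j) (k * 2 ^ j + i)))
              (fun _ _ => zero_le) hi
          exact (ENNReal.mul_ne_top (ENNReal.pow_ne_top ENNReal.ofReal_ne_top) hfin)
            (top_le_iff.mp (le_trans h1 ih))
        have hpair : ∑ i ∈ Finset.range (2 ^ (j+1)),
              μ (carlesonSq (n + (j+1)) (k * 2 ^ (j+1) + i))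
            = ∑ i ∈ Finset.range (2 ^ j),
              (μ (carlesonSq ((n + j) + 1) (2 * (k * 2 ^ j + i)))
                + μ (carlesonSq ((n + j) + 1) (2 * (k * 2 ^ j + i) + 1))) := by
          rw [show (2:ℕ) ^ (j+1) = 2 * 2 ^ j from by rw [pow_succ]; ring]
          rw [sum_range_two_mul (fun i => μ (carlesonSq (n + (j+1)) (k * (2 * 2 ^ j) + i)))]
          refine Finset.sum_congr rfl fun i _ => ?_
          rw [show k * (2 * 2 ^ j) + 2*i = 2*(k * 2 ^ j + i) from by ring,
            show k * (2 * 2 ^ j) + (2*i+1) = 2*(k * 2 ^ j + i) + 1 from by ring]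
          rfl
        calc ∑ i ∈ Finset.range (2 ^ (j+1)),
              μ (carlesonSq (n + (j+1)) (k * 2 ^ (j+1) + i))
            = ∑ i ∈ Finset.range (2 ^ j),
              (μ (carlesonSq ((n + j) + 1) (2 * (k * 2 ^ j + i)))
                + μ (carlesonSq ((n + j) + 1) (2 * (k * 2 ^ j + i) + 1))) := hpair
          _ ≤ ∑ i ∈ Finset.range (2 ^ j),
              ENNReal.ofReal (1 - τ) * μ (carlesonSq (n + j) (k * 2 ^ j + i)) :=
              Finset.sum_le_sum fun i hi => measure_step μ hτ0 hμ
                (idx_lt hk (Finset.mem_range.mp hi)) (hfinj i hi)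
          _ = ENNReal.ofReal (1 - τ) * ∑ i ∈ Finset.range (2 ^ j),
              μ (carlesonSq (n + j) (k * 2 ^ j + i)) := (Finset.mul_sum _ _ _).symm
          _ ≤ ENNReal.ofReal (1 - τ) *
              (ENNReal.ofReal (1 - τ) ^ j * μ (carlesonSq n k)) := mul_le_mul_right ih _
          _ = ENNReal.ofReal (1 - τ) ^ (j+1) * μ (carlesonSq n k) := by ring
    have hEsub : ∀ j, j ≤ g →
        {z ∈ carlesonSq n k | alpha * lam ≤ B z ∧ D z ≤ gamma * lam} ⊆
          ⋃ i ∈ Finset.range (2 ^ j), carlesonSq (n + j) (k * 2 ^ j + i) := by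
      intro j
      induction j with
      | zero =>
        intro _ z hz
        exact Set.mem_iUnion₂.mpr ⟨0, Finset.mem_range.mpr (by norm_num), by simpa using hz.1⟩
      | succ j ih =>
        intro hle z hz
        have hzj := ih (by omega) hz
        rw [Set.mem_iUnion₂] at hzj
        obtain ⟨i, hi, hzi⟩ := hzj
        rw [Finset.mem_range] at hi
        have hk' : k * 2 ^ j + i < 2 ^ (n + j) := idx_lt hk hi
        rw [sq_decomp hk'] at hzi
        rcases hzi with htp | hzi | hzi
        · exact absurd htp (fun htp =>
            no_bad_in_top bnode dnode hrec hroot B D hB hD lam alpha gamma hlam halpha hgamma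
              n k hk hparent j i hi (by omega) z htp hz.2.1 hz.2.2)
        · refine Set.mem_iUnion₂.mpr ⟨2*i,
            Finset.mem_range.mpr (show 2*i < 2 ^ (j+1) from by rw [pow_succ]; omega), ?_⟩
          rw [show k * 2 ^ (j+1) + 2*i = 2*(k * 2 ^ j + i) from by ring]
          exact hzi
        · refine Set.mem_iUnion₂.mpr ⟨2*i+1,
            Finset.mem_range.mpr (show 2*i+1 < 2 ^ (j+1) from by rw [pow_succ]; omega), ?_⟩
          rw [show k * 2 ^ (j+1) + (2*i+1) = 2*(k * 2 ^ j + i) + 1 from by ring]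
          exact hzi
    calc μ {z ∈ carlesonSq n k | alpha * lam ≤ B z ∧ D z ≤ gamma * lam}
        ≤ μ (⋃ i ∈ Finset.range (2 ^ g), carlesonSq (n + g) (k * 2 ^ g + i)) :=
          measure_mono (hEsub g le_rfl)
      _ ≤ ∑ i ∈ Finset.range (2 ^ g), μ (carlesonSq (n + g) (k * 2 ^ g + i)) :=
          measure_biUnion_finset_le _ _
      _ ≤ ENNReal.ofReal (1 - τ) ^ g * μ (carlesonSq n k) := key g
      _ = ENNReal.ofReal ((1 - τ) ^ g) * μ (carlesonSq n k) := by
          rw [ENNReal.ofReal_pow (by linarith)]
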